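/- Let β, x₁,…,x_d, b₁, b₂,… be independent indeterminates and work in the ring of formal power series over ℤ in these variables. Fix j with 1 ≤ j ≤ d and k ≥ 0. Then for every integer m with m ≥ k: Σ_{p=0}^{d-1} G^{(k)}_{m-p} · (-1)^p e_p^{(j)}(x) = x_j^{m-k} · [x_j|b]^k · ∏_{1≤i≤d, i≠j} (1+βx_i), where e_p^{(j)}(x) denotes the p-th elementary symmetric polynomial in the d-1 variables x₁,…,x_d with x_j omitted. -/

import Mathlib

open scoped BigOperators

namespace GrothDet

/-- Index type for the indeterminates: `β`, `x₁,…,x_d`, `b₁,b₂,…`. -/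
abbrev Idx (d : ℕ) := Unit ⊕ Fin d ⊕ ℕ

/-- The ambient ring: formal power series over `ℤ` in `β`, the `xᵢ` and the `bⱼ`. -/
abbrev R (d : ℕ) := MvPowerSeries (Idx d) ℤ

noncomputable def β (d : ℕ) : R d := MvPowerSeries.X (Sum.inl ())
noncomputable def x (d : ℕ) (i : Fin d) : R d := MvPowerSeries.X (Sum.inr (Sum.inl i))
noncomputable def b (d : ℕ) (ℓ : ℕ) : R d := MvPowerSeries.X (Sum.inr (Sum.inr ℓ))

/-- `x ⊕ y := x + y + βxy`. -/
noncomputable def oplus (d : ℕ) (u v : R d) : R d := u + v + β d * u * v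

/-- `[y|b]^k := (y ⊕ b₁)⋯(y ⊕ b_k)`. -/
noncomputable def fb (d : ℕ) (y : R d) (k : ℕ) : R d :=
  ∏ ℓ ∈ Finset.range k, oplus d y (b d ℓ)

/-- The multiplicative inverse of `1 + β * x j` (a unit since its constant term is `1`). -/
noncomputable def invOneAdd (d : ℕ) (j : Fin d) : R d :=
  MvPowerSeries.invOfUnit (1 + β d * x d j) 1

/-- `F^{(k)}(u) = ∏ᵢ (1+βxᵢ)/(1-xᵢu) · ∏_{ℓ=1}^k (1+(u+β)b_ℓ)` as a power series in `u`
over `R d`; here `(1-xᵢu)⁻¹ = ∑_n xᵢⁿ uⁿ`. -/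
noncomputable def F (d : ℕ) (k : ℕ) : PowerSeries (R d) :=
  (∏ i : Fin d,
      PowerSeries.C (1 + β d * x d i) * PowerSeries.mk fun n => x d i ^ n) *
    ∏ ℓ ∈ Finset.range k,
      (1 + (PowerSeries.X + PowerSeries.C (β d)) * PowerSeries.C (b d ℓ))

/-- `[u^t] F^{(k)}(u)`, extended by `0` in negative degrees `t`. -/
noncomputable def Fcoeff (d : ℕ) (k : ℕ) (t : ℤ) : R d :=
  if 0 ≤ t then PowerSeries.coeff t.toNat (F d k) else 0

/-- The sum `∑_{s≥0} f s` of a family of power series such that `β^s ∣ f s`: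
it is defined coefficientwise; on the coefficient of a monomial `n` only the
(finitely many) terms with `s ≤ n(β)` contribute, and the value is the limit of the
partial sums in the formal power series topology. -/
noncomputable def seriesSum (d : ℕ) (f : ℕ → R d) : R d :=
  (fun n => ∑ s ∈ Finset.range (n (Sum.inl ()) + 1), MvPowerSeries.coeff n (f s) :
    (Idx d →₀ ℕ) → ℤ)

/-- `G^{(k)}_m = ∑_{s≥0} (-β)^s [u^{m+s}] F^{(k)}(u)`. -/
noncomputable def G (d : ℕ) (k : ℕ) (m : ℤ) : R d :=
  seriesSum d fun s => (-β d) ^ s * Fcoeff d k (m + s)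

/-- The `p`-th elementary symmetric function of the family `f` restricted to `S`. -/
noncomputable def esym (d : ℕ) (S : Finset (Fin d)) (p : ℕ) (f : Fin d → R d) : R d :=
  ∑ t ∈ S.powersetCard p, ∏ i ∈ t, f i

/-- `x_i/(1+βx_i) = -x̄_i`. -/
noncomputable def xbar (d : ℕ) (i : Fin d) : R d := x d i * invOneAdd d i


section Aux

lemma coeff_eq_zero_of_beta_pow_dvd (d : ℕ) {g : R d} {s : ℕ} (h : β d ^ s ∣ g)
    (n : Idx d →₀ ℕ) (hn : n (Sum.inl ()) < s) : MvPowerSeries.coeff n g = 0 := by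
  rw [β] at h
  exact (MvPowerSeries.X_pow_dvd_iff.mp h) n hn

lemma coeff_seriesSum (d : ℕ) (f : ℕ → R d) (n : Idx d →₀ ℕ) :
    MvPowerSeries.coeff n (seriesSum d f) =
      ∑ s ∈ Finset.range (n (Sum.inl ()) + 1), MvPowerSeries.coeff n (f s) := rfl

lemma coeff_seriesSum_of_dvd (d : ℕ) (f : ℕ → R d) (hf : ∀ s, β d ^ s ∣ f s)
    (n : Idx d →₀ ℕ) (N : ℕ) (hN : n (Sum.inl ()) < N) :
    MvPowerSeries.coeff n (seriesSum d f) =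
      ∑ s ∈ Finset.range N, MvPowerSeries.coeff n (f s) := by
  rw [coeff_seriesSum]
  refine Finset.sum_subset (Finset.range_subset_range.mpr hN) ?_
  intro s hs hs'
  refine coeff_eq_zero_of_beta_pow_dvd d (hf s) n ?_
  simp only [Finset.mem_range] at hs hs'
  omega

lemma seriesSum_mul (d : ℕ) (f : ℕ → R d) (hf : ∀ s, β d ^ s ∣ f s) (c : R d) :
    seriesSum d f * c = seriesSum d fun s => f s * c := by
  ext n
  rw [MvPowerSeries.coeff_mul]
  have hmem : ∀ p ∈ Finset.HasAntidiagonal.antidiagonal n, Prod.fst p (Sum.inl ()) < n (Sum.inl ()) + 1 := by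
    intro p hp
    rw [Finset.HasAntidiagonal.mem_antidiagonal] at hp
    have : p.1 (Sum.inl ()) ≤ n (Sum.inl ()) := by
      rw [← hp]; simp
    omega
  calc ∑ p ∈ Finset.HasAntidiagonal.antidiagonal n,
        MvPowerSeries.coeff p.1 (seriesSum d f) * MvPowerSeries.coeff p.2 c
      = ∑ p ∈ Finset.HasAntidiagonal.antidiagonal n, ∑ s ∈ Finset.range (n (Sum.inl ()) + 1),
          MvPowerSeries.coeff p.1 (f s) * MvPowerSeries.coeff p.2 c := by
        refine Finset.sum_congr rfl fun p hp => ?_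
        rw [coeff_seriesSum_of_dvd d f hf p.1 _ (hmem p hp), Finset.sum_mul]
    _ = ∑ s ∈ Finset.range (n (Sum.inl ()) + 1), ∑ p ∈ Finset.HasAntidiagonal.antidiagonal n,
          MvPowerSeries.coeff p.1 (f s) * MvPowerSeries.coeff p.2 c := Finset.sum_comm
    _ = ∑ s ∈ Finset.range (n (Sum.inl ()) + 1), MvPowerSeries.coeff n (f s * c) := by
        exact Finset.sum_congr rfl fun s _ => (MvPowerSeries.coeff_mul _ _ _).symm
    _ = _ := (coeff_seriesSum_of_dvd d _ (fun s => dvd_mul_of_dvd_left (hf s) c) n _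
          (Nat.lt_succ_self _)).symm

lemma sum_seriesSum {ι : Type*} (d : ℕ) (T : Finset ι) (f : ι → ℕ → R d) :
    ∑ p ∈ T, seriesSum d (f p) = seriesSum d fun s => ∑ p ∈ T, f p s := by
  ext n
  rw [map_sum, coeff_seriesSum]
  simp_rw [coeff_seriesSum, map_sum]
  exact Finset.sum_comm

lemma seriesSum_geom (d : ℕ) (j : Fin d) :
    seriesSum d (fun s => (-(β d * x d j)) ^ s * (1 + β d * x d j)) = 1 := by
  have hdvd : ∀ s : ℕ, β d ^ s ∣ (-(β d * x d j)) ^ s * (1 + β d * x d j) := fun s =>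
    dvd_mul_of_dvd_left (pow_dvd_pow_of_dvd ⟨-(x d j), by ring⟩ s) _
  ext n
  rw [coeff_seriesSum_of_dvd d _ hdvd n (n (Sum.inl ()) + 1) (Nat.lt_succ_self _), ← map_sum,
    ← Finset.sum_mul]
  have h2 : (∑ s ∈ Finset.range (n (Sum.inl ()) + 1), (-(β d * x d j)) ^ s) *
      (1 + β d * x d j) = 1 - (-(β d * x d j)) ^ (n (Sum.inl ()) + 1) := by
    have h := geom_sum_mul (-(β d * x d j)) (n (Sum.inl ()) + 1)
    linear_combination -h
  rw [h2, map_sub]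
  have h3 : MvPowerSeries.coeff n ((-(β d * x d j)) ^ (n (Sum.inl ()) + 1)) = 0 :=
    coeff_eq_zero_of_beta_pow_dvd d (pow_dvd_pow_of_dvd ⟨-(x d j), by ring⟩ _) n
      (Nat.lt_succ_self _)
  rw [h3, sub_zero]

lemma mk_geom_mul (d : ℕ) (a : R d) :
    (PowerSeries.mk fun n => a ^ n) * (1 - PowerSeries.C a * PowerSeries.X) = 1 := by
  have h : (PowerSeries.mk fun n => a ^ n) * (PowerSeries.C a * PowerSeries.X)
      = (PowerSeries.C a * PowerSeries.mk fun n => a ^ n) * PowerSeries.X := by ring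
  ext nn
  rw [mul_sub, mul_one, map_sub, h]
  cases nn with
  | zero => simp
  | succ n =>
      rw [PowerSeries.coeff_succ_mul_X]
      simp [PowerSeries.coeff_mk, PowerSeries.coeff_one, pow_succ, mul_comm]

lemma esym_zero (d : ℕ) (S : Finset (Fin d)) (f : Fin d → R d) : esym d S 0 f = 1 := by
  simp [esym, Finset.powersetCard_zero]

lemma esym_eq_zero (d : ℕ) (S : Finset (Fin d)) (p : ℕ) (f : Fin d → R d)
    (h : S.card < p) : esym d S p f = 0 := by
  simp [esym, Finset.powersetCard_eq_empty.mpr h]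

lemma esym_insert (d : ℕ) (a : Fin d) (S : Finset (Fin d)) (ha : a ∉ S) (f : Fin d → R d)
    (p : ℕ) : esym d (insert a S) (p + 1) f = esym d S (p + 1) f + f a * esym d S p f := by
  unfold esym
  rw [Finset.powersetCard_succ_insert ha, Finset.sum_union, Finset.sum_image, Finset.mul_sum]
  · congr 1
    refine Finset.sum_congr rfl fun t ht => ?_
    rw [Finset.mem_powersetCard] at ht
    rw [Finset.prod_insert (fun h => ha (ht.1 h))]
  · intro t1 h1 t2 h2 hins
    rw [Finset.mem_coe, Finset.mem_powersetCard] at h1 h2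
    have e1 : t1 = (insert a t1).erase a := by
      rw [Finset.erase_insert (fun h => ha (h1.1 h))]
    have e2 : t2 = (insert a t2).erase a := by
      rw [Finset.erase_insert (fun h => ha (h2.1 h))]
    rw [e1, e2, hins]
  · rw [Finset.disjoint_left]
    intro t ht hti
    rw [Finset.mem_powersetCard] at ht
    obtain ⟨t', _, rfl⟩ := Finset.mem_image.mp hti
    exact ha (ht.1 (Finset.mem_insert_self a t'))

lemma coeff_prod_one_sub (d : ℕ) (S : Finset (Fin d)) (f : Fin d → R d) :
    ∀ p : ℕ, PowerSeries.coeff p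
        (∏ i ∈ S, (1 - PowerSeries.C (f i) * PowerSeries.X))
      = (-1 : R d) ^ p * esym d S p f := by
  induction S using Finset.induction_on with
  | empty =>
      intro p
      rw [Finset.prod_empty]
      cases p with
      | zero => simp [esym_zero]
      | succ p =>
          rw [esym_eq_zero d ∅ (p + 1) f (by simp)]
          simp [PowerSeries.coeff_one]
  | @insert a S' ha ih =>
      intro p
      rw [Finset.prod_insert ha, sub_mul, one_mul, map_sub]
      have h : PowerSeries.C (f a) * PowerSeries.X *
          (∏ i ∈ S', (1 - PowerSeries.C (f i) * PowerSeries.X))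
          = PowerSeries.C (f a) *
            ((∏ i ∈ S', (1 - PowerSeries.C (f i) * PowerSeries.X)) * PowerSeries.X) := by
        ring
      rw [h]
      cases p with
      | zero =>
          simp only [PowerSeries.coeff_zero_eq_constantCoeff, map_mul]
          simp [ih 0, esym_zero]
      | succ p =>
          rw [PowerSeries.coeff_C_mul, PowerSeries.coeff_succ_mul_X, ih (p + 1), ih p,
            esym_insert d a S' ha f p]
          ring

lemma coeff_mk_mul_prodb (d : ℕ) (j : Fin d) :
    ∀ (k t : ℕ), k ≤ t →
    PowerSeries.coeff t ((PowerSeries.mk fun n => x d j ^ n) *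
        ∏ ℓ ∈ Finset.range k,
          (1 + (PowerSeries.X + PowerSeries.C (β d)) * PowerSeries.C (b d ℓ)))
      = x d j ^ (t - k) * fb d (x d j) k := by
  intro k
  induction k with
  | zero =>
      intro t _
      simp [fb, PowerSeries.coeff_mk]
  | succ k ih =>
      intro t ht
      obtain ⟨t', rfl⟩ : ∃ t', t = t' + 1 := ⟨t - 1, by omega⟩
      rw [Finset.prod_range_succ, ← mul_assoc]
      set A := (PowerSeries.mk fun n => x d j ^ n) * ∏ ℓ ∈ Finset.range k,
          (1 + (PowerSeries.X + PowerSeries.C (β d)) * PowerSeries.C (b d ℓ)) with hA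
      have expand : A * (1 + (PowerSeries.X + PowerSeries.C (β d)) *
            PowerSeries.C (b d k))
          = A + PowerSeries.C (b d k) * (A * PowerSeries.X)
            + PowerSeries.C (β d * b d k) * A := by
        rw [map_mul]; ring
      rw [expand, map_add, map_add, PowerSeries.coeff_C_mul, PowerSeries.coeff_C_mul,
        PowerSeries.coeff_succ_mul_X, ih (t' + 1) (by omega), ih t' (by omega)]
      have e1 : t' + 1 - k = (t' - k) + 1 := by omega
      have e2 : t' + 1 - (k + 1) = t' - k := by omega
      rw [e1, e2]
      simp only [fb, Finset.prod_range_succ, oplus, pow_succ]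
      ring

lemma F_mul_E (d k : ℕ) (j : Fin d) :
    F d k * ∏ i ∈ Finset.univ \ {j}, (1 - PowerSeries.C (x d i) * PowerSeries.X)
      = PowerSeries.C
          ((1 + β d * x d j) * ∏ i ∈ Finset.univ \ {j}, (1 + β d * x d i)) *
        ((PowerSeries.mk fun n => x d j ^ n) *
          ∏ ℓ ∈ Finset.range k,
            (1 + (PowerSeries.X + PowerSeries.C (β d)) * PowerSeries.C (b d ℓ))) := by
  have hsub : ({j} : Finset (Fin d)) ⊆ Finset.univ := Finset.subset_univ _
  have hsplit : (∏ i : Fin d,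
        (PowerSeries.C (1 + β d * x d i) * PowerSeries.mk fun n => x d i ^ n))
      = (∏ i ∈ Finset.univ \ {j},
          (PowerSeries.C (1 + β d * x d i) * PowerSeries.mk fun n => x d i ^ n))
        * (PowerSeries.C (1 + β d * x d j) * PowerSeries.mk fun n => x d j ^ n) := by
    rw [← Finset.prod_sdiff hsub, Finset.prod_singleton]
  have hkey : (∏ i ∈ Finset.univ \ {j},
        (PowerSeries.C (1 + β d * x d i) * PowerSeries.mk fun n => x d i ^ n))
      * ∏ i ∈ Finset.univ \ {j}, (1 - PowerSeries.C (x d i) * PowerSeries.X)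
      = PowerSeries.C (∏ i ∈ Finset.univ \ {j}, (1 + β d * x d i)) := by
    rw [← Finset.prod_mul_distrib, map_prod]
    refine Finset.prod_congr rfl fun i _ => ?_
    rw [mul_assoc, mk_geom_mul, mul_one]
  rw [F, hsplit, map_mul, ← hkey]
  ring

lemma key_coeff (d k : ℕ) (j : Fin d) (t : ℤ) (ht : (k : ℤ) ≤ t) :
    ∑ p ∈ Finset.range d,
        Fcoeff d k (t - p) * ((-1 : R d) ^ p * esym d (Finset.univ \ {j}) p (x d))
      = (1 + β d * x d j) * (∏ i ∈ Finset.univ \ {j}, (1 + β d * x d i)) *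
        (x d j ^ (t - k).toNat * fb d (x d j) k) := by
  obtain ⟨n, rfl⟩ : ∃ n : ℕ, t = (n : ℤ) := ⟨t.toNat, by omega⟩
  have hkn : k ≤ n := by exact_mod_cast ht
  have hd : 0 < d := j.pos
  have hcard : (Finset.univ \ {j} : Finset (Fin d)).card = d - 1 := by
    rw [Finset.card_sdiff_of_subset (Finset.singleton_subset_iff.mpr (Finset.mem_univ j))]
    simp
  set N := max d (n + 1) with hN
  have step1 : ∑ p ∈ Finset.range d,
        Fcoeff d k ((n : ℤ) - p) * ((-1 : R d) ^ p * esym d (Finset.univ \ {j}) p (x d))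
      = ∑ p ∈ Finset.range N,
        Fcoeff d k ((n : ℤ) - p) * ((-1 : R d) ^ p * esym d (Finset.univ \ {j}) p (x d)) := by
    refine Finset.sum_subset (Finset.range_subset_range.mpr (le_max_left _ _)) ?_
    intro p hp hp'
    simp only [Finset.mem_range] at hp hp'
    rw [esym_eq_zero d _ p (x d) (by omega), mul_zero, mul_zero]
  have step2 : ∑ p ∈ Finset.range N,
        Fcoeff d k ((n : ℤ) - p) * ((-1 : R d) ^ p * esym d (Finset.univ \ {j}) p (x d))
      = PowerSeries.coeff n
          (F d k * ∏ i ∈ Finset.univ \ {j}, (1 - PowerSeries.C (x d i) * PowerSeries.X)) := by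
    rw [mul_comm, PowerSeries.coeff_mul, Finset.Nat.sum_antidiagonal_eq_sum_range_succ
        (fun a c => PowerSeries.coeff a
          (∏ i ∈ Finset.univ \ {j}, (1 - PowerSeries.C (x d i) * PowerSeries.X)) *
          PowerSeries.coeff c (F d k)) n]
    have hvan : ∀ p ∈ Finset.range N, p ∉ Finset.range (n + 1) →
        Fcoeff d k ((n : ℤ) - p) * ((-1 : R d) ^ p * esym d (Finset.univ \ {j}) p (x d)) = 0 := by
      intro p hp hp'
      simp only [Finset.mem_range] at hp'
      rw [Fcoeff, if_neg (by omega), zero_mul]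
    rw [← Finset.sum_subset (Finset.range_subset_range.mpr (le_max_right d (n + 1))) hvan]
    refine Finset.sum_congr rfl fun p hp => ?_
    simp only [Finset.mem_range] at hp
    rw [Fcoeff, if_pos (by omega), coeff_prod_one_sub d _ (x d) p]
    have htn : ((n : ℤ) - p).toNat = n - p := by omega
    rw [htn, mul_comm]
  have step3 : PowerSeries.coeff n
        (F d k * ∏ i ∈ Finset.univ \ {j}, (1 - PowerSeries.C (x d i) * PowerSeries.X))
      = (1 + β d * x d j) * (∏ i ∈ Finset.univ \ {j}, (1 + β d * x d i)) *
        (x d j ^ (n - k) * fb d (x d j) k) := by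
    rw [F_mul_E d k j, PowerSeries.coeff_C_mul, coeff_mk_mul_prodb d j k n hkn]
  have htk : ((n : ℤ) - k).toNat = n - k := by omega
  rw [step1, step2, step3, htk]

end Aux

/-- For `m ≥ k`:
`∑_{p=0}^{d-1} G^{(k)}_{m-p} (-1)^p e_p^{(j)}(x) = x_j^{m-k} [x_j|b]^k ∏_{i≠j} (1+βx_i)`. -/
theorem grothendieck_convolution_e
    (d k : ℕ) (j : Fin d) (m : ℤ) (hm : (k : ℤ) ≤ m) :
    ∑ p ∈ Finset.range d,
        G d k (m - p) * ((-1 : R d) ^ p * esym d (Finset.univ \ {j}) p (x d))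
      = x d j ^ (m - k).toNat * fb d (x d j) k *
          ∏ i ∈ Finset.univ \ {j}, (1 + β d * x d i) := by
  have hβdvd : ∀ s : ℕ, β d ^ s ∣ (-β d) ^ s := fun s =>
    pow_dvd_pow_of_dvd ⟨-1, by ring⟩ s
  have hβxdvd : ∀ s : ℕ, β d ^ s ∣ (-(β d * x d j)) ^ s := fun s =>
    pow_dvd_pow_of_dvd ⟨-(x d j), by ring⟩ s
  calc ∑ p ∈ Finset.range d, G d k (m - p) * ((-1 : R d) ^ p * esym d (Finset.univ \ {j}) p (x d))
      = ∑ p ∈ Finset.range d, seriesSum d (fun s =>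
          (-β d) ^ s * Fcoeff d k (m - p + s) *
            ((-1 : R d) ^ p * esym d (Finset.univ \ {j}) p (x d))) := by
        refine Finset.sum_congr rfl fun p _ => ?_
        rw [G, seriesSum_mul d _ (fun s => dvd_mul_of_dvd_left (hβdvd s) _)]
    _ = seriesSum d (fun s => ∑ p ∈ Finset.range d,
          (-β d) ^ s * Fcoeff d k (m - p + s) *
            ((-1 : R d) ^ p * esym d (Finset.univ \ {j}) p (x d))) :=
        sum_seriesSum d (Finset.range d) _
    _ = seriesSum d (fun s => (-(β d * x d j)) ^ s * (1 + β d * x d j) *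
          (x d j ^ (m - k).toNat * fb d (x d j) k *
            ∏ i ∈ Finset.univ \ {j}, (1 + β d * x d i))) := by
        refine congrArg (seriesSum d) (funext fun s => ?_)
        have h1 : ∑ p ∈ Finset.range d,
            (-β d) ^ s * Fcoeff d k (m - p + s) *
              ((-1 : R d) ^ p * esym d (Finset.univ \ {j}) p (x d))
            = (-β d) ^ s * ∑ p ∈ Finset.range d,
              Fcoeff d k ((m + s) - p) * ((-1 : R d) ^ p * esym d (Finset.univ \ {j}) p (x d)) := by
          rw [Finset.mul_sum]
          refine Finset.sum_congr rfl fun p _ => ?_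
          have hmp : m - p + s = (m + s) - p := by ring
          rw [hmp, mul_assoc]
        rw [h1, key_coeff d k j (m + s) (by omega)]
        have h2 : ((m + s) - k).toNat = (m - k).toNat + s := by omega
        have h3 : (-(β d * x d j)) ^ s = (-β d) ^ s * x d j ^ s := by
          rw [← neg_mul, mul_pow]
        rw [h2, pow_add, h3]
        ring
    _ = seriesSum d (fun s => (-(β d * x d j)) ^ s * (1 + β d * x d j)) *
          (x d j ^ (m - k).toNat * fb d (x d j) k *
            ∏ i ∈ Finset.univ \ {j}, (1 + β d * x d i)) :=
        (seriesSum_mul d _ (fun s => dvd_mul_of_dvd_left (hβxdvd s) _) _).symm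
    _ = x d j ^ (m - k).toNat * fb d (x d j) k *
          ∏ i ∈ Finset.univ \ {j}, (1 + β d * x d i) := by
        rw [seriesSum_geom, one_mul]

end GrothDet
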